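/- Let X be a contractible compact Hausdorff topological space, let B be a unital C*-algebra, and let f : X → B be a continuous function such that f(x) is a projection (f(x)* = f(x) = f(x)²) for every x ∈ X. Then there exist a point x₀ ∈ X and a continuous function u : X → B such that u(x) is a unitary of B for every x ∈ X and u(x) f(x) u(x)* = f(x₀) for all x ∈ X. In particular, every projection-valued element of C(X, B) is equivalent to a constant function via a unitary of C(X, B). -/

import Mathlib

noncomputable section

section Aux

variable {A : Type*} [CStarAlgebra A]

lemma my_commute_cfcHom {a b : A} (ha : IsSelfAdjoint a) (h : Commute b a)
    (g : C(spectrum ℝ a, ℝ)) : Commute b (cfcHom ha g) := by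
  have hS : IsClosed {x : A | Commute b x} :=
    isClosed_eq (continuous_const.mul continuous_id) (continuous_id.mul continuous_const)
  have hcl : IsClosed (⇑(cfcHom ha (R := ℝ)) ⁻¹' {x : A | Commute b x}) :=
    hS.preimage (cfcHom_continuous ha)
  have hpoly : (polynomialFunctions (spectrum ℝ a) : Set C(spectrum ℝ a, ℝ)) ⊆
      ⇑(cfcHom ha (R := ℝ)) ⁻¹' {x : A | Commute b x} := by
    intro g' hg'
    rw [SetLike.mem_coe, polynomialFunctions, Subalgebra.mem_map] at hg'
    obtain ⟨q, -, rfl⟩ := hg'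
    have h1 : cfcHom ha (Polynomial.toContinuousMapOnAlgHom (spectrum ℝ a) q) =
        Polynomial.aeval a q := by
      rw [← cfc_polynomial q a ha, cfc_apply _ a ha]
      congr 1
    have h2 : ∀ q : Polynomial ℝ, Commute b (Polynomial.aeval a q) := by
      intro q
      induction q using Polynomial.induction_on' with
      | add p q hp hq => simpa only [map_add] using hp.add_right hq
      | monomial n r =>
        simpa only [Polynomial.aeval_monomial] using
          (Algebra.commute_algebraMap_right r b).mul_right (h.pow_right n)
    simpa only [Set.mem_preimage, h1, Set.mem_setOf_eq] using h2 q
  have htop := polynomialFunctions.topologicalClosure (spectrum ℝ a)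
  have hmem : g ∈ closure (polynomialFunctions (spectrum ℝ a) : Set C(spectrum ℝ a, ℝ)) := by
    rw [← Subalgebra.topologicalClosure_coe, htop]
    exact Algebra.mem_top
  exact closure_minimal hpoly hcl hmem

lemma my_commute_cfc {a b : A} (ha : IsSelfAdjoint a) (h : Commute b a) (f : ℝ → ℝ) :
    Commute b (cfc f a) := by
  by_cases hf : ContinuousOn f (spectrum ℝ a)
  · rw [cfc_apply f a ha hf]
    exact my_commute_cfcHom ha h _
  · rw [cfc_apply_of_not_continuousOn a hf]
    exact Commute.zero_right b

lemma my_isUnit_of_left_right {M : Type*} [Monoid M] {a l r : M}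
    (hl : l * a = 1) (hr : a * r = 1) : IsUnit a := by
  have hlr : l = r := by
    calc l = l * (a * r) := by rw [hr, mul_one]
    _ = (l * a) * r := by rw [mul_assoc]
    _ = r := by rw [hl, one_mul]
  exact ⟨⟨a, r, hr, hlr ▸ hl⟩, rfl⟩

lemma comp1 {A : Type*} [Ring A] {p q : A} (hp2 : p * p = p) (hq2 : q * q = q) :
    (p * q + (1 - p) * (1 - q)) * (q * p + (1 - q) * (1 - p)) = 1 - (p - q) * (p - q) := by
  have hp2' : ∀ x : A, p * (p * x) = p * x := fun x => by rw [← mul_assoc, hp2]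
  have hq2' : ∀ x : A, q * (q * x) = q * x := fun x => by rw [← mul_assoc, hq2]
  simp only [mul_add, add_mul, mul_sub, sub_mul, mul_one, one_mul, mul_assoc, hp2, hq2, hp2', hq2']
  abel

lemma comp2 {A : Type*} [Ring A] {p q : A} (hp2 : p * p = p) (hq2 : q * q = q) :
    Commute p ((p - q) * (p - q)) := by
  have hp2' : ∀ x : A, p * (p * x) = p * x := fun x => by rw [← mul_assoc, hp2]
  have hq2' : ∀ x : A, q * (q * x) = q * x := fun x => by rw [← mul_assoc, hq2]
  unfold Commute SemiconjBy
  simp only [mul_add, add_mul, mul_sub, sub_mul, mul_one, one_mul, mul_assoc, hp2, hq2, hp2', hq2']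
  abel

lemma comp3 {A : Type*} [Ring A] {p q : A} (hp2 : p * p = p) (hq2 : q * q = q) :
    (q * p + (1 - q) * (1 - p)) * p = q * (q * p + (1 - q) * (1 - p)) := by
  have hp2' : ∀ x : A, p * (p * x) = p * x := fun x => by rw [← mul_assoc, hp2]
  have hq2' : ∀ x : A, q * (q * x) = q * x := fun x => by rw [← mul_assoc, hq2]
  simp only [mul_add, add_mul, mul_sub, sub_mul, mul_one, one_mul, mul_assoc, hp2, hq2, hp2', hq2']
  abel

lemma unitary_conj_of_close {p q : A} (hp : star p = p) (hp2 : p * p = p)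
    (hq : star q = q) (hq2 : q * q = q) (hpq : ‖p - q‖ < 1) :
    ∃ u : A, star u * u = 1 ∧ u * star u = 1 ∧ u * p * star u = q := by
  rcases subsingleton_or_nontrivial A with hA | hA
  · exact ⟨1, Subsingleton.elim _ _, Subsingleton.elim _ _, Subsingleton.elim _ _⟩
  set d : A := (p - q) * (p - q) with hd_def
  set b : A := 1 - d with hb_def
  set a : A := q * p + (1 - q) * (1 - p) with ha_def
  have hsd : star (p - q) = p - q := by rw [star_sub, hp, hq]
  have hd_sa : IsSelfAdjoint d := by rw [IsSelfAdjoint, hd_def, star_mul, hsd]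
  have hb_sa : IsSelfAdjoint b := by
    rw [IsSelfAdjoint, hb_def, star_sub, star_one, hd_sa.star_eq]
  have hstar_a : star a = p * q + (1 - p) * (1 - q) := by
    simp [ha_def, star_add, star_mul, star_sub, star_one, hp, hq]
  have key1 : star a * a = b := by rw [hstar_a]; exact comp1 hp2 hq2
  have key2 : a * star a = b := by
    rw [hstar_a]
    have := comp1 hq2 hp2
    rw [show (q - p) * (q - p) = (p - q) * (p - q) by rw [← neg_sub p q, neg_mul_neg]] at this
    exact this
  -- norm bound
  have hd_norm : ‖d‖ < 1 := by
    have h1 : ‖d‖ ≤ ‖p - q‖ * ‖p - q‖ := norm_mul_le _ _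
    nlinarith [norm_nonneg (p - q)]
  have hc : (0:ℝ) < 1 - ‖d‖ := by linarith
  have hspec : spectrum ℝ b ⊆ Set.Ici (1 - ‖d‖) := by
    intro x hx
    have hsing := spectrum.singleton_sub_eq d (1:ℝ)
    rw [map_one] at hsing
    rw [hb_def, ← hsing] at hx
    obtain ⟨e, he, y, hy, hxy⟩ := hx
    rw [Set.mem_singleton_iff] at he
    subst he
    have hnorm : ‖y‖ ≤ ‖d‖ := spectrum.norm_le_norm_of_mem hy
    rw [Real.norm_eq_abs] at hnorm
    have : y ≤ ‖d‖ := (abs_le.mp hnorm).2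
    simp only [Set.mem_Ici]
    have hxy' : 1 - y = x := hxy
    linarith
  have hsp_pos : ∀ x ∈ spectrum ℝ b, (0:ℝ) < x := fun x hx => lt_of_lt_of_le hc (hspec hx)
  set g : ℝ → ℝ := fun x => (Real.sqrt x)⁻¹ with hg_def
  have hg : ContinuousOn g (spectrum ℝ b) := by
    apply ContinuousOn.inv₀ Real.continuous_sqrt.continuousOn
    intro x hx
    exact Real.sqrt_ne_zero'.mpr (hsp_pos x hx)
  set z : A := cfc g b with hz_def
  have hz_sa : IsSelfAdjoint z := cfc_predicate g b
  have hbz : Commute b z := my_commute_cfc hb_sa (Commute.refl b) g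
  have hpz : Commute p z :=
    my_commute_cfc hb_sa ((Commute.one_right p).sub_right (comp2 hp2 hq2)) g
  have hzzb : z * z * b = 1 := by
    calc z * z * b = cfc g b * cfc g b * cfc (fun x : ℝ => x) b := by
          rw [cfc_id' ℝ b hb_sa]
    _ = cfc (fun x : ℝ => g x * g x) b * cfc (fun x : ℝ => x) b := by
          rw [cfc_mul g g b hg hg]
    _ = cfc (fun x : ℝ => (g x * g x) * x) b := by
          rw [← cfc_mul (fun x : ℝ => g x * g x) (fun x : ℝ => x) b (hg.mul hg) continuous_id.continuousOn]
    _ = cfc (fun _ : ℝ => (1:ℝ)) b := by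
          apply cfc_congr
          intro x hx
          have hxpos := hsp_pos x hx
          have hsq : Real.sqrt x * Real.sqrt x = x := Real.mul_self_sqrt hxpos.le
          simp only [hg_def]
          rw [← mul_inv, hsq, inv_mul_cancel₀ hxpos.ne']
    _ = 1 := by rw [cfc_const 1 b hb_sa, map_one]
  have hbzz : b * (z * z) = 1 := by
    have hcomm : Commute b (z * z) := hbz.mul_right hbz
    rw [hcomm.eq]
    exact hzzb
  have hunit_a : IsUnit a := by
    apply my_isUnit_of_left_right (l := z * z * star a) (r := star a * (z * z))
    · rw [mul_assoc, key1]
      exact hzzb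
    · rw [← mul_assoc, key2]
      exact hbzz
  have hzbz : z * b * z = 1 := by
    rw [mul_assoc, hbz.eq, ← mul_assoc]
    exact hzzb
  have hunit_z : IsUnit z := by
    have hsqrt_cont : ContinuousOn Real.sqrt (spectrum ℝ b) :=
      Real.continuous_sqrt.continuousOn
    have hzw : z * cfc Real.sqrt b = 1 := by
      rw [hz_def, ← cfc_mul g Real.sqrt b hg hsqrt_cont]
      calc cfc (fun x => g x * Real.sqrt x) b = cfc (fun _ : ℝ => (1:ℝ)) b := by
            apply cfc_congr
            intro x hx
            have hxpos := hsp_pos x hx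
            simp only [hg_def]
            rw [inv_mul_cancel₀ (Real.sqrt_ne_zero'.mpr hxpos)]
      _ = 1 := by rw [cfc_const 1 b hb_sa, map_one]
    have hwz : cfc Real.sqrt b * z = 1 := by
      have hcomm : Commute z (cfc Real.sqrt b) := by
        rw [hz_def]
        exact cfc_commute_cfc g Real.sqrt b
      rw [← hcomm.eq]
      exact hzw
    exact my_isUnit_of_left_right hwz hzw
  have h1 : star (a * z) * (a * z) = 1 := by
    rw [star_mul, hz_sa.star_eq]
    have e : z * star a * (a * z) = z * (star a * a) * z := by noncomm_ring
    rw [e, key1]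
    exact hzbz
  have hu_unit : IsUnit (a * z) := hunit_a.mul hunit_z
  have h2 : (a * z) * star (a * z) = 1 := by
    obtain ⟨v, hv⟩ := hu_unit
    have hsv : star (a * z) = (↑v⁻¹ : A) := by
      calc star (a * z) = star (a * z) * (↑v * ↑v⁻¹) := by rw [Units.mul_inv, mul_one]
      _ = (star (a * z) * (a * z)) * ↑v⁻¹ := by rw [hv, ← mul_assoc]
      _ = ↑v⁻¹ := by rw [h1, one_mul]
    rw [hsv, ← hv, Units.mul_inv]
  have hap : a * p = q * a := comp3 hp2 hq2
  have h3 : (a * z) * p * star (a * z) = q := by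
    have e : (a * z) * p = q * (a * z) := by
      rw [mul_assoc, ← hpz.eq, ← mul_assoc, hap, mul_assoc]
    rw [e, mul_assoc, h2, mul_one]
  exact ⟨a * z, h1, h2, h3⟩

end Aux

/-- Let `X` be a contractible compact Hausdorff space, `B` a unital
C*-algebra, and `f : X → B` a continuous projection-valued function.  Then there are a point
`x₀ ∈ X` and a continuous unitary-valued function `u : X → B` with
`u x * f x * (u x)* = f x₀` for all `x`; i.e. every projection-valued element of `C(X, B)` is
unitarily equivalent to a constant function. -/
theorem stable_iso_stmt9
    {X : Type*} [TopologicalSpace X] [CompactSpace X] [T2Space X] [ContractibleSpace X]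
    {B : Type*} [NormedRing B] [StarRing B] [CStarRing B] [NormedAlgebra ℂ B]
    [StarModule ℂ B] [CompleteSpace B]
    (f : C(X, B)) (hf_sa : ∀ x, star (f x) = f x) (hf_idem : ∀ x, f x * f x = f x) :
    ∃ (x₀ : X) (u : C(X, B)),
      (∀ x, star (u x) * u x = 1 ∧ u x * star (u x) = 1) ∧
      (∀ x, u x * f x * star (u x) = f x₀) := by
  letI : CStarAlgebra B :=
    { ‹NormedRing B›, ‹StarRing B›, ‹CStarRing B›, ‹NormedAlgebra ℂ B›, ‹StarModule ℂ B›,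
      ‹CompleteSpace B› with }
  obtain ⟨x₀, hnull⟩ := id_nullhomotopic X
  obtain ⟨H⟩ := hnull
  set G : C(unitInterval, C(X, B)) := ContinuousMap.curry (f.comp H.toContinuousMap) with hG
  have hGapp : ∀ t x, G t x = f (H (t, x)) := fun t x => rfl
  have hGsa : ∀ s, star (G s) = G s := by
    intro s; ext x
    rw [ContinuousMap.star_apply, hGapp]
    exact hf_sa _
  have hGmul : ∀ s, G s * G s = G s := by
    intro s; ext x
    rw [ContinuousMap.mul_apply, hGapp]
    exact hf_idem _
  obtain ⟨δ, hδpos, hδ⟩ := ContinuousMap.uniform_continuity G 1 one_pos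
  obtain ⟨n, hn⟩ := exists_nat_one_div_lt hδpos
  set N : ℕ := n + 1 with hN
  have hNpos : (0:ℝ) < N := by positivity
  set t : ℕ → unitInterval := fun i => Set.projIcc 0 1 zero_le_one ((i : ℝ) / N) with ht
  have htcoe : ∀ i : ℕ, i ≤ N → (t i : ℝ) = i / N := by
    intro i hi
    have hmem : (i : ℝ) / N ∈ Set.Icc (0:ℝ) 1 :=
      ⟨by positivity, by rw [div_le_one hNpos]; exact_mod_cast hi⟩
    show ((Set.projIcc 0 1 zero_le_one ((i : ℝ) / N) : unitInterval) : ℝ) = i / N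
    rw [Set.projIcc_of_mem _ hmem]
  have key : ∀ i : ℕ, i ≤ N →
      ∃ u : C(X, B), star u * u = 1 ∧ u * star u = 1 ∧ u * G (t 0) * star u = G (t i) := by
    intro i
    induction i with
    | zero => exact fun _ => ⟨1, by simp, by simp, by simp⟩
    | succ i ih =>
      intro hi
      obtain ⟨u, hu1, hu2, hu3⟩ := ih (Nat.le_of_succ_le hi)
      have hdist : ‖G (t i) - G (t (i+1))‖ < 1 := by
        rw [← dist_eq_norm]
        apply hδ
        rw [Subtype.dist_eq, htcoe i (Nat.le_of_succ_le hi), htcoe (i+1) hi, Real.dist_eq]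
        have heq : ((i:ℝ)/N - ((i+1:ℕ):ℝ)/N) = -(1/N) := by push_cast; ring
        rw [heq, abs_neg, abs_of_pos (by positivity)]
        have : (1:ℝ)/N = 1/(n+1) := by rw [hN]; push_cast; ring
        rw [this]
        exact hn
      obtain ⟨v, hv1, hv2, hv3⟩ :=
        unitary_conj_of_close (hGsa (t i)) (hGmul (t i)) (hGsa (t (i+1))) (hGmul (t (i+1))) hdist
      refine ⟨v * u, ?_, ?_, ?_⟩
      · rw [star_mul]
        have e : star u * star v * (v * u) = star u * (star v * v) * u := by noncomm_ring
        rw [e, hv1, mul_one, hu1]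
      · rw [star_mul]
        have e : v * u * (star u * star v) = v * (u * star u) * star v := by noncomm_ring
        rw [e, hu2, mul_one, hv2]
      · have e : v * u * G (t 0) * star (v * u) = v * (u * G (t 0) * star u) * star v := by
          rw [star_mul]; noncomm_ring
        rw [e, hu3, hv3]
  obtain ⟨u, hu1, hu2, hu3⟩ := key N le_rfl
  have ht0 : G (t 0) = f := by
    have h0 : t 0 = 0 := Subtype.ext (by rw [htcoe 0 (Nat.zero_le N)]; simp)
    ext x
    rw [h0, hGapp]
    rw [H.apply_zero]
    rfl
  have htN : G (t N) = ContinuousMap.const X (f x₀) := by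
    have h1 : t N = 1 := Subtype.ext (by rw [htcoe N le_rfl]; field_simp; rfl)
    ext x
    rw [h1, hGapp]
    rw [H.apply_one]
    rfl
  rw [ht0, htN] at hu3
  refine ⟨x₀, u, fun x => ⟨?_, ?_⟩, fun x => ?_⟩
  · have := ContinuousMap.congr_fun hu1 x
    simpa [ContinuousMap.mul_apply, ContinuousMap.star_apply, ContinuousMap.one_apply] using this
  · have := ContinuousMap.congr_fun hu2 x
    simpa [ContinuousMap.mul_apply, ContinuousMap.star_apply, ContinuousMap.one_apply] using this
  · have := ContinuousMap.congr_fun hu3 x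
    simpa [ContinuousMap.mul_apply, ContinuousMap.star_apply, ContinuousMap.const_apply] using this
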